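/- With a Cliff(1,1)-structure (Φ1,Φ2,Φ3) on (V,g) of signature (2,2), the algebraic curvature tensor R := λ0 R_0 + Σᵢ λᵢ R_{Φᵢ} + Σ_{i<j} λᵢⱼ[R_{Φᵢ} + R_{Φⱼ} - R_{(Φᵢ-Φⱼ)}] is Osserman: the characteristic polynomial of J_R(x) is the same for all unit timelike vectors x. -/

import Mathlib

/-- The Jacobi operator of `R₀`: `y ↦ R₀(y,x)x = g(y,x)x - g(x,x)y`. -/
def J0L {V : Type*} [AddCommGroup V] [Module ℝ V]
    (g : V →ₗ[ℝ] V →ₗ[ℝ] ℝ) (x : V) : V →ₗ[ℝ] V :=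
  (g.flip x).smulRight x - g x x • LinearMap.id

/-- The Jacobi operator of `R_Φ`: `y ↦ R_Φ(y,x)x = g(Φx,x)Φy - 3g(Φy,x)Φx`. -/
def JPhiL {V : Type*} [AddCommGroup V] [Module ℝ V]
    (g : V →ₗ[ℝ] V →ₗ[ℝ] ℝ) (Φ : V →ₗ[ℝ] V) (x : V) : V →ₗ[ℝ] V :=
  g (Φ x) x • Φ - (3 : ℝ) • ((g.flip x ∘ₗ Φ).smulRight (Φ x))

/-- The Jacobi operator of
`R = λ₀R₀ + Σᵢ λᵢ R_{Φᵢ} + Σ_{i<j} λᵢⱼ[R_{Φᵢ}+R_{Φⱼ}-R_{Φᵢ-Φⱼ}]`. -/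
def JbigR {V : Type*} [AddCommGroup V] [Module ℝ V]
    (g : V →ₗ[ℝ] V →ₗ[ℝ] ℝ) (Φ₁ Φ₂ Φ₃ : V →ₗ[ℝ] V)
    (l0 l1 l2 l3 l12 l13 l23 : ℝ) (x : V) : V →ₗ[ℝ] V :=
  l0 • J0L g x + l1 • JPhiL g Φ₁ x + l2 • JPhiL g Φ₂ x + l3 • JPhiL g Φ₃ x +
    l12 • (JPhiL g Φ₁ x + JPhiL g Φ₂ x - JPhiL g (Φ₁ - Φ₂) x) +
    l13 • (JPhiL g Φ₁ x + JPhiL g Φ₃ x - JPhiL g (Φ₁ - Φ₃) x) +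
    l23 • (JPhiL g Φ₂ x + JPhiL g Φ₃ x - JPhiL g (Φ₂ - Φ₃) x)

/-- The model matrix of the Jacobi operator in the adapted basis. -/
def Mmat (l0 l1 l2 l3 l12 l13 l23 : ℝ) : Matrix (Fin 4) (Fin 4) ℝ :=
  !![0, 0, 0, 0;
     0, l0 - 3*l1, 3*l12, 3*l13;
     0, -(3*l12), l0 + 3*l2, 3*l23;
     0, -(3*l13), 3*l23, l0 + 3*l3]

theorem charpoly_JbigR {V : Type*} [AddCommGroup V] [Module ℝ V]
    [Module.Finite ℝ V] [Module.Free ℝ V]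
    (g : V →ₗ[ℝ] V →ₗ[ℝ] ℝ) (hsymm : ∀ v w, g v w = g w v)
    (e : Module.Basis (Fin 4) ℝ V)
    (Φ₁ Φ₂ Φ₃ : V →ₗ[ℝ] V)
    (hskew₁ : ∀ v w, g (Φ₁ v) w = - g v (Φ₁ w))
    (hskew₂ : ∀ v w, g (Φ₂ v) w = - g v (Φ₂ w))
    (hskew₃ : ∀ v w, g (Φ₃ v) w = - g v (Φ₃ w))
    (hsq₁ : Φ₁ ∘ₗ Φ₁ = -LinearMap.id)
    (hsq₂ : Φ₂ ∘ₗ Φ₂ = LinearMap.id) (hsq₃ : Φ₃ ∘ₗ Φ₃ = LinearMap.id)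
    (hac₁₂ : Φ₁ ∘ₗ Φ₂ + Φ₂ ∘ₗ Φ₁ = 0) (hac₁₃ : Φ₁ ∘ₗ Φ₃ + Φ₃ ∘ₗ Φ₁ = 0)
    (hac₂₃ : Φ₂ ∘ₗ Φ₃ + Φ₃ ∘ₗ Φ₂ = 0)
    (l0 l1 l2 l3 l12 l13 l23 : ℝ) (x : V) (hx : g x x = -1) :
    (JbigR g Φ₁ Φ₂ Φ₃ l0 l1 l2 l3 l12 l13 l23 x).charpoly =
      (Mmat l0 l1 l2 l3 l12 l13 l23).charpoly := by
  -- composition facts pointwise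
  have c11 : Φ₁ (Φ₁ x) = -x := by
    have := LinearMap.congr_fun hsq₁ x; simpa using this
  have c22 : Φ₂ (Φ₂ x) = x := by
    have := LinearMap.congr_fun hsq₂ x; simpa using this
  have c33 : Φ₃ (Φ₃ x) = x := by
    have := LinearMap.congr_fun hsq₃ x; simpa using this
  have a12 : Φ₁ (Φ₂ x) = - Φ₂ (Φ₁ x) := by
    have := LinearMap.congr_fun hac₁₂ x; simp at this; linear_combination (norm := module) this
  have a13 : Φ₁ (Φ₃ x) = - Φ₃ (Φ₁ x) := by
    have := LinearMap.congr_fun hac₁₃ x; simp at this; linear_combination (norm := module) this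
  have a23 : Φ₂ (Φ₃ x) = - Φ₃ (Φ₂ x) := by
    have := LinearMap.congr_fun hac₂₃ x; simp at this; linear_combination (norm := module) this
  -- scalar facts
  have h10 : g (Φ₁ x) x = 0 := by
    have h1 := hskew₁ x x; have h2 := hsymm x (Φ₁ x); linarith
  have h20 : g (Φ₂ x) x = 0 := by
    have h1 := hskew₂ x x; have h2 := hsymm x (Φ₂ x); linarith
  have h30 : g (Φ₃ x) x = 0 := by
    have h1 := hskew₃ x x; have h2 := hsymm x (Φ₃ x); linarith
  have h11 : g (Φ₁ (Φ₁ x)) x = 1 := by rw [c11]; simp [hx]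
  have h22 : g (Φ₂ (Φ₂ x)) x = -1 := by rw [c22, hx]
  have h33 : g (Φ₃ (Φ₃ x)) x = -1 := by rw [c33, hx]
  -- orthogonality of Φᵢ x
  have g12 : g (Φ₁ x) (Φ₂ x) = 0 := by
    have h1 := hskew₂ (Φ₁ x) x  -- g (Φ₂ (Φ₁ x)) x = - g (Φ₁ x) (Φ₂ x)
    have h2 := hskew₁ (Φ₂ x) x  -- g (Φ₁ (Φ₂ x)) x = - g (Φ₂ x) (Φ₁ x)
    have h3 := hsymm (Φ₂ x) (Φ₁ x)
    have h4 : g (Φ₁ (Φ₂ x)) x = - g (Φ₂ (Φ₁ x)) x := by rw [a12]; simp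
    linarith
  have g13 : g (Φ₁ x) (Φ₃ x) = 0 := by
    have h1 := hskew₃ (Φ₁ x) x
    have h2 := hskew₁ (Φ₃ x) x
    have h3 := hsymm (Φ₃ x) (Φ₁ x)
    have h4 : g (Φ₁ (Φ₃ x)) x = - g (Φ₃ (Φ₁ x)) x := by rw [a13]; simp
    linarith
  have g23 : g (Φ₂ x) (Φ₃ x) = 0 := by
    have h1 := hskew₃ (Φ₂ x) x
    have h2 := hskew₂ (Φ₃ x) x
    have h3 := hsymm (Φ₃ x) (Φ₂ x)
    have h4 : g (Φ₂ (Φ₃ x)) x = - g (Φ₃ (Φ₂ x)) x := by rw [a23]; simp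
    linarith
  have h12 : g (Φ₁ (Φ₂ x)) x = 0 := by
    have h2 := hskew₁ (Φ₂ x) x
    have h3 := hsymm (Φ₂ x) (Φ₁ x)
    linarith
  have h21 : g (Φ₂ (Φ₁ x)) x = 0 := by
    have h2 := hskew₂ (Φ₁ x) x; linarith
  have h13 : g (Φ₁ (Φ₃ x)) x = 0 := by
    have h2 := hskew₁ (Φ₃ x) x
    have h3 := hsymm (Φ₃ x) (Φ₁ x)
    linarith
  have h31 : g (Φ₃ (Φ₁ x)) x = 0 := by
    have h2 := hskew₃ (Φ₁ x) x; linarith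
  have h23 : g (Φ₂ (Φ₃ x)) x = 0 := by
    have h2 := hskew₂ (Φ₃ x) x
    have h3 := hsymm (Φ₃ x) (Φ₂ x)
    linarith
  have h32 : g (Φ₃ (Φ₂ x)) x = 0 := by
    have h2 := hskew₃ (Φ₂ x) x; linarith
  -- Gram facts for the adapted family
  have G11 : g (Φ₁ x) (Φ₁ x) = -1 := by
    have h1 := hskew₁ x (Φ₁ x); rw [c11] at h1; simpa [hx] using h1
  have G22 : g (Φ₂ x) (Φ₂ x) = 1 := by
    have h1 := hskew₂ x (Φ₂ x); rw [c22] at h1; simpa [hx] using h1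
  have G33 : g (Φ₃ x) (Φ₃ x) = 1 := by
    have h1 := hskew₃ x (Φ₃ x); rw [c33] at h1; simpa [hx] using h1
  have h01 : g x (Φ₁ x) = 0 := by rw [hsymm]; exact h10
  have h02 : g x (Φ₂ x) = 0 := by rw [hsymm]; exact h20
  have h03 : g x (Φ₃ x) = 0 := by rw [hsymm]; exact h30
  have g21 : g (Φ₂ x) (Φ₁ x) = 0 := by rw [hsymm]; exact g12
  have g31 : g (Φ₃ x) (Φ₁ x) = 0 := by rw [hsymm]; exact g13
  have g32 : g (Φ₃ x) (Φ₂ x) = 0 := by rw [hsymm]; exact g23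
  -- the adapted family
  set u : Fin 4 → V := ![x, Φ₁ x, Φ₂ x, Φ₃ x] with hu
  have hli : LinearIndependent ℝ u := by
    rw [Fintype.linearIndependent_iff]
    intro c hc i
    have key : ∀ w : V, g w (∑ i : Fin 4, c i • u i) = 0 := by
      intro w; rw [hc]; simp
    fin_cases i
    · have := key x
      simp [hu, Fin.sum_univ_four, hx, h01, h02, h03] at this
      exact this
    · have := key (Φ₁ x)
      simp [hu, Fin.sum_univ_four, h10, G11, g12, g13] at this
      exact this
    · have := key (Φ₂ x)
      simp [hu, Fin.sum_univ_four, h20, g21, G22, g23] at this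
      exact this
    · have := key (Φ₃ x)
      simp [hu, Fin.sum_univ_four, h30, g31, g32, G33] at this
      exact this
  have hcard : Fintype.card (Fin 4) = Module.finrank ℝ V := by
    rw [Module.finrank_eq_card_basis e]
  let b : Module.Basis (Fin 4) ℝ V := basisOfLinearIndependentOfCardEqFinrank hli hcard
  have hb : ⇑b = u := coe_basisOfLinearIndependentOfCardEqFinrank hli hcard
  have hJ : JbigR g Φ₁ Φ₂ Φ₃ l0 l1 l2 l3 l12 l13 l23 x
      = Matrix.toLin b b (Mmat l0 l1 l2 l3 l12 l13 l23) := by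
    apply b.ext
    intro i
    rw [Matrix.toLin_self]
    fin_cases i <;>
      simp [hb, hu, Fin.sum_univ_four, Mmat, JbigR, J0L, JPhiL,
        LinearMap.sub_apply, LinearMap.add_apply, LinearMap.smul_apply,
        LinearMap.smulRight_apply, LinearMap.comp_apply, LinearMap.flip_apply,
        hx, h10, h20, h30, h11, h22, h33, h12, h21, h13, h31, h23, h32] <;>
      module
  rw [hJ, ← LinearMap.charpoly_toMatrix _ b, LinearMap.toMatrix_toLin]

/-- the curvature tensor built from a Cliff(1,1)-structure is Osserman:
the characteristic polynomial of its Jacobi operator is the same for all unit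
timelike vectors. -/
theorem bigR_is_Osserman {V : Type*} [AddCommGroup V] [Module ℝ V]
    [Module.Finite ℝ V] [Module.Free ℝ V]
    (g : V →ₗ[ℝ] V →ₗ[ℝ] ℝ) (hsymm : ∀ v w, g v w = g w v)
    (e : Module.Basis (Fin 4) ℝ V)
    (he : ∀ i j, g (e i) (e j) =
      if i = j then (if (i : ℕ) < 2 then (-1 : ℝ) else 1) else 0)
    (Φ₁ Φ₂ Φ₃ : V →ₗ[ℝ] V)
    (hskew₁ : ∀ v w, g (Φ₁ v) w = - g v (Φ₁ w))
    (hskew₂ : ∀ v w, g (Φ₂ v) w = - g v (Φ₂ w))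
    (hskew₃ : ∀ v w, g (Φ₃ v) w = - g v (Φ₃ w))
    (hsq₁ : Φ₁ ∘ₗ Φ₁ = -LinearMap.id)
    (hsq₂ : Φ₂ ∘ₗ Φ₂ = LinearMap.id) (hsq₃ : Φ₃ ∘ₗ Φ₃ = LinearMap.id)
    (hac₁₂ : Φ₁ ∘ₗ Φ₂ + Φ₂ ∘ₗ Φ₁ = 0) (hac₁₃ : Φ₁ ∘ₗ Φ₃ + Φ₃ ∘ₗ Φ₁ = 0)
    (hac₂₃ : Φ₂ ∘ₗ Φ₃ + Φ₃ ∘ₗ Φ₂ = 0)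
    (hK : Φ₃ = Φ₂ ∘ₗ Φ₁)
    (l0 l1 l2 l3 l12 l13 l23 : ℝ) :
    ∀ x x' : V, g x x = -1 → g x' x' = -1 →
      (JbigR g Φ₁ Φ₂ Φ₃ l0 l1 l2 l3 l12 l13 l23 x).charpoly =
      (JbigR g Φ₁ Φ₂ Φ₃ l0 l1 l2 l3 l12 l13 l23 x').charpoly := by
  intro x x' hx hx'
  rw [charpoly_JbigR g hsymm e Φ₁ Φ₂ Φ₃ hskew₁ hskew₂ hskew₃ hsq₁ hsq₂ hsq₃
      hac₁₂ hac₁₃ hac₂₃ l0 l1 l2 l3 l12 l13 l23 x hx,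
    charpoly_JbigR g hsymm e Φ₁ Φ₂ Φ₃ hskew₁ hskew₂ hskew₃ hsq₁ hsq₂ hsq₃
      hac₁₂ hac₁₃ hac₂₃ l0 l1 l2 l3 l12 l13 l23 x' hx']
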